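/- arXiv:1109.0062 — 3 statements merged into one kernel-verified Lean document; each statement's English description precedes it below -/
import Mathlib

section
/- Let A be an irreducible transition matrix on ℕ and let I ⊂ ℕ be a finite set. Then there exists a finite set 𝒜 ⊇ I of symbols such that the restriction A|_{𝒜×𝒜} is irreducible, i.e., for any i,j ∈ 𝒜 there is a word with all symbols in 𝒜 connecting i to j. -/
open Finset

private lemma chain_split {R : ℕ → ℕ → Prop} :
    ∀ (w : List ℕ) (i j a : ℕ), List.Chain R i (w ++ [j]) → a ∈ w →
      (∃ u, (∀ x ∈ u, x ∈ w) ∧ List.Chain R i (u ++ [a])) ∧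
      (∃ v, (∀ x ∈ v, x ∈ w) ∧ List.Chain R a (v ++ [j])) := by
  intro w
  induction w with
  | nil => intro i j a _ ha; simp at ha
  | cons b w' ih =>
    intro i j a h ha
    simp only [List.cons_append, List.Chain, List.chain_cons] at h
    obtain ⟨hib, hb⟩ := h
    rcases List.mem_cons.1 ha with rfl | ha'
    · constructor
      · exact ⟨[], by simp, by simpa [List.Chain] using hib⟩
      · exact ⟨w', fun x hx => List.mem_cons_of_mem _ hx, hb⟩
    · obtain ⟨⟨u, hu, hcu⟩, ⟨v, hv, hcv⟩⟩ := ih b j a hb ha'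
      constructor
      · refine ⟨b :: u, ?_, ?_⟩
        · intro x hx
          rcases List.mem_cons.1 hx with rfl | hx
          · exact List.mem_cons_self
          · exact List.mem_cons_of_mem _ (hu x hx)
        · simp only [List.cons_append, List.Chain, List.chain_cons]; exact ⟨hib, hcu⟩
      · exact ⟨v, fun x hx => List.mem_cons_of_mem _ (hv x hx), hcv⟩

private lemma chain_comp {R : ℕ → ℕ → Prop} :
    ∀ (u : List ℕ) (i m j : ℕ) (v : List ℕ),
      List.Chain R i (u ++ [m]) → List.Chain R m (v ++ [j]) →
      List.Chain R i ((u ++ m :: v) ++ [j]) := by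
  intro u
  induction u with
  | nil =>
    intro i m j v h1 h2
    simp only [List.nil_append, List.Chain, List.chain_cons] at h1
    simp only [List.nil_append, List.cons_append, List.Chain, List.chain_cons]
    exact ⟨h1.1, h2⟩
  | cons b u' ih =>
    intro i m j v h1 h2
    simp only [List.cons_append, List.Chain, List.chain_cons] at h1
    simp only [List.cons_append, List.Chain, List.chain_cons]
    exact ⟨h1.1, ih b m j v h1.2 h2⟩

/-- if `A` is an irreducible transition matrix on `ℕ` (any two symbols
are connected by an allowable word), then any finite set `I` of symbols can be
enlarged to a finite set `𝒜 ⊇ I` such that `A` restricted to `𝒜 × 𝒜` is irreducible: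
any two symbols of `𝒜` are connected by an allowable word all of whose letters lie
in `𝒜`. -/
theorem stmt5 (A : ℕ → ℕ → Bool)
    (hirr : ∀ i j : ℕ, ∃ w : List ℕ,
      List.Chain (fun a b => A a b = true) i (w ++ [j]))
    (I : Finset ℕ) :
    ∃ 𝒜 : Finset ℕ, I ⊆ 𝒜 ∧
      ∀ i ∈ 𝒜, ∀ j ∈ 𝒜, ∃ w : List ℕ, (∀ a ∈ w, a ∈ 𝒜) ∧
        List.Chain (fun a b => A a b = true) i (w ++ [j]) := by
  set R : ℕ → ℕ → Prop := fun a b => A a b = true with hR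
  choose w hw using hirr
  set 𝒜 : Finset ℕ := I ∪ (I ×ˢ I).biUnion (fun p => (w p.1 p.2).toFinset) with h𝒜
  have hsub : I ⊆ 𝒜 := Finset.subset_union_left
  have hwsub : ∀ i ∈ I, ∀ j ∈ I, ∀ x ∈ w i j, x ∈ 𝒜 := by
    intro i hi j hj x hx
    refine Finset.mem_union_right _ (Finset.mem_biUnion.2 ⟨(i, j), ?_, ?_⟩)
    · exact Finset.mk_mem_product hi hj
    · simpa using hx
  -- Forward: every a ∈ 𝒜 connects within 𝒜 to some element of I
  have fwd : ∀ a ∈ 𝒜, ∃ j' ∈ I, ∃ u, (∀ x ∈ u, x ∈ 𝒜) ∧ List.Chain R a (u ++ [j']) := by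
    intro a ha
    rcases Finset.mem_union.1 ha with haI | hab
    · exact ⟨a, haI, w a a, hwsub a haI a haI, hw a a⟩
    · obtain ⟨⟨i, j⟩, hij, hax⟩ := Finset.mem_biUnion.1 hab
      obtain ⟨hi, hj⟩ := Finset.mem_product.1 hij
      have hax' : a ∈ w i j := by simpa using hax
      obtain ⟨_, ⟨v, hv, hcv⟩⟩ := chain_split (R := R) (w i j) i j a (hw i j) hax'
      exact ⟨j, hj, v, fun x hx => hwsub i hi j hj x (hv x hx), hcv⟩
  have bwd : ∀ a ∈ 𝒜, ∃ i' ∈ I, ∃ u, (∀ x ∈ u, x ∈ 𝒜) ∧ List.Chain R i' (u ++ [a]) := by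
    intro a ha
    rcases Finset.mem_union.1 ha with haI | hab
    · exact ⟨a, haI, w a a, hwsub a haI a haI, hw a a⟩
    · obtain ⟨⟨i, j⟩, hij, hax⟩ := Finset.mem_biUnion.1 hab
      obtain ⟨hi, hj⟩ := Finset.mem_product.1 hij
      have hax' : a ∈ w i j := by simpa using hax
      obtain ⟨⟨u, hu, hcu⟩, _⟩ := chain_split (R := R) (w i j) i j a (hw i j) hax'
      exact ⟨i, hi, u, fun x hx => hwsub i hi j hj x (hu x hx), hcu⟩
  refine ⟨𝒜, hsub, ?_⟩
  intro i hi j hj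
  obtain ⟨j', hj', u, hu, hcu⟩ := fwd i hi
  obtain ⟨i', hi', v, hv, hcv⟩ := bwd j hj
  -- connect j' to i' using the chosen word
  have hm := hw j' i'
  have hc1 : List.Chain R i ((u ++ j' :: w j' i') ++ [i']) :=
    chain_comp u i j' i' (w j' i') hcu hm
  have hc2 : List.Chain R i (((u ++ j' :: w j' i') ++ i' :: v) ++ [j]) :=
    chain_comp _ i i' j v hc1 hcv
  refine ⟨(u ++ j' :: w j' i') ++ i' :: v, ?_, hc2⟩
  intro x hx
  rcases List.mem_append.1 hx with h1 | h2
  · rcases List.mem_append.1 h1 with h3 | h4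
    · exact hu x h3
    · rcases List.mem_cons.1 h4 with rfl | h5
      · exact hsub hj'
      · exact hwsub j' hj' i' hi' x h5
  · rcases List.mem_cons.1 h2 with rfl | h6
    · exact hsub hi'
    · exact hv x h6
end

section
/- Let x be a periodic point of σ with β(x) ≥ β - ε, and suppose some symbol of x is ≥ I₂ while sup f|[j] < β - ε for all j ≥ I₁ (with I₁ ≤ I₂). Then there exists a word x_ℓ…x_{ℓ+m} appearing in x such that: (1) κ(ℓ, m | x) ≥ β(x); (2) x_ℓ < I₁ and x_{ℓ+m} ≥ I₂; and (3) x_{ℓ+j} < I₂ for all 0 ≤ j ≤ m-1. -/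
open Finset

abbrev MShift (A : ℕ → ℕ → Bool) := {x : ℕ → ℕ // ∀ i, A (x i) (x (i + 1)) = true}

def mshift {A : ℕ → ℕ → Bool} (x : MShift A) : MShift A :=
  ⟨fun i => x.val (i + 1), fun i => x.prop (i + 1)⟩

lemma mshift_iter_val {A : ℕ → ℕ → Bool} (x : MShift A) (k : ℕ) :
    ∀ i, (mshift^[k] x).val i = x.val (i + k) := by
  induction k with
  | zero => intro i; rfl
  | succ k ih =>
    intro i
    rw [Function.iterate_succ_apply']
    show (mshift^[k] x).val (i + 1) = _
    rw [ih, show i + 1 + k = i + (k + 1) from by omega]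

/-- Fact 1: let `x` be periodic with `β(x) ≥ β - ε`, with some symbol
`≥ I₂`, where `sup f|[j] < β - ε` for `j ≥ I₁` and `I₁ ≤ I₂` (so `x` has a symbol
`< I₁`). Then some word `x_ℓ … x_{ℓ+m}` of `x` satisfies: (1) `κ(ℓ,m|x) ≥ β(x)`;
(2) `x_ℓ < I₁` and `x_{ℓ+m} ≥ I₂`; (3) `x_{ℓ+j} < I₂` for `0 ≤ j ≤ m-1`. -/
theorem stmt7 (A : ℕ → ℕ → Bool) (f : MShift A → ℝ) (β ε : ℝ) (hε : 0 < ε)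
    (I₁ I₂ : ℕ) (hI : I₁ ≤ I₂)
    (hI₁ : ∀ y : MShift A, I₁ ≤ y.val 0 → f y < β - ε)
    (x : MShift A) (n : ℕ) (hn : 1 ≤ n) (hper : mshift^[n] x = x)
    (hβx : β - ε ≤ (n : ℝ)⁻¹ * ∑ j ∈ Finset.range n, f (mshift^[j] x))
    (hbig : ∃ j < n, I₂ ≤ x.val j)
    (hsmall : ∃ j, x.val j < I₁) :
    ∃ ℓ m : ℕ,
      (n : ℝ)⁻¹ * ∑ j ∈ Finset.range n, f (mshift^[j] x) ≤
        ((m : ℝ) + 1)⁻¹ * ∑ j ∈ Finset.range (m + 1), f (mshift^[ℓ + j] x) ∧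
      x.val ℓ < I₁ ∧ I₂ ≤ x.val (ℓ + m) ∧ ∀ j < m, x.val (ℓ + j) < I₂ := by
  classical
  set a : ℕ → ℝ := fun t => f (mshift^[t] x) with ha
  set b : ℝ := (n : ℝ)⁻¹ * ∑ j ∈ Finset.range n, f (mshift^[j] x) with hb
  have hn0 : (0:ℝ) < n := by exact_mod_cast hn
  have hxval : ∀ t, x.val (t + n) = x.val t := by
    intro t
    conv_rhs => rw [← hper]
    rw [mshift_iter_val]
  have hav : ∀ t, a (t + n) = a t := by
    intro t
    simp only [ha]
    rw [Function.iterate_add_apply, hper]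
  have hsmallf : ∀ t, I₁ ≤ x.val t → a t < β - ε := by
    intro t ht
    apply hI₁
    rw [mshift_iter_val]
    simpa using ht
  have hβb : β - ε ≤ b := hβx
  have hsum : ∑ j ∈ Finset.range n, a j = n * b := by
    rw [hb]
    field_simp
    rfl
  have hshift : ∀ s, ∑ j ∈ Finset.range n, a (s + j) = n * b := by
    intro s
    induction s with
    | zero => simpa using hsum
    | succ s ih =>
      have h1 : ∑ j ∈ Finset.range (n+1), a (s + j)
          = (∑ j ∈ Finset.range n, a (s + (j+1))) + a (s + 0) :=
        Finset.sum_range_succ' _ n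
      have h2 : ∑ j ∈ Finset.range (n+1), a (s + j)
          = ∑ j ∈ Finset.range n, a (s + j) + a (s + n) :=
        Finset.sum_range_succ _ n
      have h3 : a (s + n) = a (s + 0) := by simpa using hav s
      have h4 : ∑ j ∈ Finset.range n, a (s + 1 + j)
          = ∑ j ∈ Finset.range n, a (s + (j+1)) := by
        apply Finset.sum_congr rfl
        intro j _
        congr 1
        omega
      rw [h4]
      have := h1.symm.trans h2
      rw [h3] at this
      linarith [ih, this]
  obtain ⟨q, hqn, hqbig⟩ := hbig
  set S : ℕ → ℝ := fun t => ∑ j ∈ Finset.range t, (a (q+1+j) - b) with hS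
  have hS0 : S 0 = 0 := by simp [hS]
  have hSn : S n = 0 := by
    simp only [hS, Finset.sum_sub_distrib, Finset.sum_const, Finset.card_range,
      nsmul_eq_mul]
    rw [hshift (q+1)]
    ring
  have hSdiff : ∀ t1 t2, t1 ≤ t2 →
      S t2 - S t1 = ∑ j ∈ Finset.Ico t1 t2, (a (q+1+j) - b) := by
    intro t1 t2 h
    rw [Finset.sum_Ico_eq_sub _ h]
  -- the set of cut points
  set T : Finset ℕ := (Finset.range n).filter (fun r => r = 0 ∨ I₂ ≤ x.val (q + r)) with hT
  have hT0 : 0 ∈ T := by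
    simp [hT]
    omega
  obtain ⟨p, hpT, hpmin⟩ := T.exists_min_image S ⟨0, hT0⟩
  have hpn : p < n := Finset.mem_range.mp (Finset.mem_filter.mp hpT).1
  have hSp0 : S p ≤ 0 := by
    have := hpmin 0 hT0
    rwa [hS0] at this
  -- next big position
  set B' : Finset ℕ := (Finset.Icc (p+1) n).filter (fun r => I₂ ≤ x.val (q + r)) with hB'
  have hnB' : n ∈ B' := by
    simp only [hB', Finset.mem_filter, Finset.mem_Icc]
    refine ⟨⟨hpn, le_refl n⟩, ?_⟩
    rw [hxval q]
    exact hqbig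
  set p' : ℕ := B'.min' ⟨n, hnB'⟩ with hp'
  have hp'mem : p' ∈ B' := B'.min'_mem _
  have hp'min : ∀ r ∈ B', p' ≤ r := fun r hr => B'.min'_le r hr
  have hpp' : p < p' := by
    have := (Finset.mem_Icc.mp (Finset.mem_filter.mp hp'mem).1).1
    omega
  have hp'n : p' ≤ n := (Finset.mem_Icc.mp (Finset.mem_filter.mp hp'mem).1).2
  have hp'big : I₂ ≤ x.val (q + p') := (Finset.mem_filter.mp hp'mem).2
  have hnobig : ∀ r, p < r → r < p' → x.val (q + r) < I₂ := by
    intro r h1 h2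
    by_contra hc
    push_neg at hc
    have : r ∈ B' := by
      simp only [hB', Finset.mem_filter, Finset.mem_Icc]
      exact ⟨⟨h1, by omega⟩, hc⟩
    have := hp'min r this
    omega
  have hSpp' : S p ≤ S p' := by
    rcases eq_or_lt_of_le hp'n with heq | hlt
    · rw [heq, hSn]; exact hSp0
    · apply hpmin
      simp only [hT, Finset.mem_filter, Finset.mem_range]
      exact ⟨hlt, Or.inr hp'big⟩
  -- a small position exists in (p, p']
  have hexsmall : ∃ r, p < r ∧ r ≤ p' ∧ x.val (q + r) < I₁ := by
    by_contra h
    push_neg at h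
    have hneg : ∀ j ∈ Finset.Ico p p', a (q+1+j) - b < 0 := by
      intro j hj
      rw [Finset.mem_Ico] at hj
      have hbig' : I₁ ≤ x.val (q + (j+1)) := h (j+1) (by omega) (by omega)
      have : a (q + (j+1)) < β - ε := hsmallf _ hbig'
      have he : q + 1 + j = q + (j+1) := by omega
      rw [he]
      linarith
    have hne : (Finset.Ico p p').Nonempty := by
      rw [Finset.nonempty_Ico]; exact hpp'
    have hlt : ∑ j ∈ Finset.Ico p p', (a (q+1+j) - b) < 0 :=
      Finset.sum_neg hneg hne
    rw [← hSdiff p p' (le_of_lt hpp')] at hlt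
    linarith
  set ℓ' : ℕ := Nat.find hexsmall with hℓ'
  obtain ⟨hpℓ', hℓ'p'le, hℓ'small⟩ := Nat.find_spec hexsmall
  have hℓ'min : ∀ t, t < ℓ' → ¬(p < t ∧ t ≤ p' ∧ x.val (q + t) < I₁) :=
    fun t ht => Nat.find_min hexsmall ht
  have hℓ'p' : ℓ' < p' := by
    rcases eq_or_lt_of_le hℓ'p'le with heq | hlt
    · exfalso; rw [heq] at hℓ'small; omega
    · exact hlt
  have hSℓ : S (ℓ'-1) ≤ S p := by
    have hd := hSdiff p (ℓ'-1) (by omega)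
    have hnp : ∑ j ∈ Finset.Ico p (ℓ'-1), (a (q+1+j) - b) ≤ 0 := by
      apply Finset.sum_nonpos
      intro j hj
      rw [Finset.mem_Ico] at hj
      have hns : ¬(p < j+1 ∧ j+1 ≤ p' ∧ x.val (q + (j+1)) < I₁) :=
        hℓ'min (j+1) (by omega)
      push_neg at hns
      have hbig' : I₁ ≤ x.val (q + (j+1)) := hns (by omega) (by omega)
      have : a (q + (j+1)) < β - ε := hsmallf _ hbig'
      have he : q + 1 + j = q + (j+1) := by omega
      rw [he]
      linarith
    linarith
  set m : ℕ := p' - ℓ' with hm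
  refine ⟨q + ℓ', m, ?_, ?_, ?_, ?_⟩
  · -- average inequality
    have hkey : ∑ j ∈ Finset.range (m+1), a (q + ℓ' + j)
        = S p' - S (ℓ'-1) + ((m:ℝ)+1) * b := by
      rw [hSdiff (ℓ'-1) p' (by omega)]
      rw [Finset.sum_Ico_eq_sum_range]
      have hcard : p' - (ℓ'-1) = m + 1 := by omega
      rw [hcard]
      rw [Finset.sum_sub_distrib, Finset.sum_const, Finset.card_range, nsmul_eq_mul]
      have hre : ∑ j ∈ Finset.range (m+1), a (q + 1 + (ℓ' - 1 + j))
          = ∑ j ∈ Finset.range (m+1), a (q + ℓ' + j) := by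
        apply Finset.sum_congr rfl
        intro j _
        congr 1
        omega
      rw [hre]
      push_cast
      ring
    have hge : ((m:ℝ)+1) * b ≤ ∑ j ∈ Finset.range (m+1), a (q + ℓ' + j) := by
      rw [hkey]
      linarith
    have hm0 : (0:ℝ) < (m:ℝ) + 1 := by positivity
    rw [le_inv_mul_iff₀ hm0, mul_comm]
    have hr : ∑ j ∈ Finset.range (m + 1), f (mshift^[q + ℓ' + j] x)
        = ∑ j ∈ Finset.range (m + 1), a (q + ℓ' + j) := rfl
    rw [hr]
    linarith
  · exact hℓ'small
  · have : q + ℓ' + m = q + p' := by omega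
    rw [this]
    exact hp'big
  · intro j hj
    have : q + ℓ' + j = q + (ℓ' + j) := by omega
    rw [this]
    exact hnobig (ℓ' + j) (by omega) (by omega)
end

section
/- (Key cutting lemma) Under the setup of the paper, if x is a periodic point of σ in Σ_A(ℕ) with β(x) ≥ β - ε whose orbit is not contained in Σ_A(𝒜₂), then there exists a periodic point z ∈ Σ_A(𝒜₂) with β(z) > β(x); moreover one can take β(z) ≥ κ_r(ℓ,m|x) + δ/(r+2) for the word given by the maximal-word decomposition. -/
open MeasureTheory Finset

open scoped ENNReal

namespace Stmt9Aux

variable {A : ℕ → ℕ → Bool}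

lemma iterate_val (x : MShift A) (k : ℕ) : ∀ i, (mshift^[k] x).val i = x.val (i + k) := by
  induction k with
  | zero => intro i; rfl
  | succ k ih =>
    intro i
    rw [Function.iterate_succ_apply']
    show (mshift^[k] x).val (i+1) = _
    rw [ih (i+1)]; ring_nf

lemma sum_rotate {M : Type*} [AddCommMonoid M] (g : ℕ → M) (n : ℕ) (h : g n = g 0) :
    ∑ j ∈ Finset.range n, g (j + 1) = ∑ j ∈ Finset.range n, g j := by
  rcases Nat.eq_zero_or_pos n with hn | hn
  · simp [hn]
  · have key : ∀ j ∈ Finset.range n, g (j + 1) = g ((j + 1) % n) := by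
      intro j hj
      rw [Finset.mem_range] at hj
      rcases eq_or_lt_of_le (Nat.succ_le_of_lt hj) with he | hl
      · rw [show j + 1 = n by omega, Nat.mod_self, h]
      · rw [Nat.mod_eq_of_lt (by omega)]
    rw [Finset.sum_congr rfl key]
    refine Finset.sum_nbij' (i := fun j => (j + 1) % n)
      (j := fun k => if k = 0 then n - 1 else k - 1) ?_ ?_ ?_ ?_ ?_
    · intro a _; exact Finset.mem_range.mpr (Nat.mod_lt _ hn)
    · intro b hb; simp only [Finset.mem_range] at hb ⊢; split <;> omega
    · intro a ha
      simp only [Finset.mem_range] at ha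
      rcases eq_or_lt_of_le (Nat.succ_le_of_lt ha) with he | hl
      · rw [show a + 1 = n by omega, Nat.mod_self, if_pos rfl]; omega
      · rw [Nat.mod_eq_of_lt (by omega), if_neg (by omega)]; omega
    · intro b hb
      simp only [Finset.mem_range] at hb
      by_cases hb0 : b = 0
      · subst hb0; rw [if_pos rfl, Nat.sub_add_cancel hn, Nat.mod_self]
      · rw [if_neg hb0, Nat.sub_add_cancel (Nat.one_le_iff_ne_zero.mpr hb0),
          Nat.mod_eq_of_lt hb]
    · intro a _; rfl

lemma chain_getD {R : ℕ → ℕ → Prop} : ∀ (l : List ℕ) (a : ℕ), List.Chain R a l →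
    ∀ k, k + 1 < (a :: l).length → R ((a :: l).getD k 0) ((a :: l).getD (k + 1) 0) := by
  intro l
  induction l with
  | nil => intro a _ k hk; simp at hk
  | cons b l ih =>
    intro a hc k hk
    rcases List.chain_cons.mp hc with ⟨hab, hc'⟩
    match k with
    | 0 => simpa using hab
    | (k+1) =>
      have := ih b hc' k (by simpa using Nat.lt_of_succ_lt_succ hk)
      simpa using this

def cyc (A : ℕ → ℕ → Bool) (a : ℕ) (L : List ℕ)
    (h : List.Chain (fun a b => A a b = true) a (L ++ [a])) : MShift A := by
  refine ⟨fun i => (a :: (L ++ [a])).getD (i % (L.length + 1)) 0, ?_⟩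
  intro i
  set p := L.length + 1 with hp
  set c := a :: (L ++ [a]) with hc
  have hclen : c.length = p + 1 := by simp [hc, hp]
  have hk : i % p < p := Nat.mod_lt _ (by omega)
  have hmod : (i + 1) % p = (i % p + 1) % p := ((Nat.mod_modEq i p).add_right 1).symm
  show A (c.getD (i % p) 0) (c.getD ((i + 1) % p) 0) = true
  rcases eq_or_lt_of_le (Nat.succ_le_of_lt hk) with he | hl
  · have he' : i % p + 1 = p := he
    have h0 : (i + 1) % p = 0 := by rw [hmod, he', Nat.mod_self]
    have hgp : c.getD p 0 = a := by
      rw [hc, hp, List.getD_cons_succ, List.getD_append_right L [a] 0 L.length (le_refl _)]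
      simp
    have hchain := chain_getD (L ++ [a]) a h (i % p)
      (by rw [show (a :: (L ++ [a])).length = p + 1 from hclen]; omega)
    rw [he', hgp] at hchain
    rw [h0]
    exact hchain
  · have hl' : i % p + 1 < p := hl
    have h1 : (i + 1) % p = i % p + 1 := by rw [hmod, Nat.mod_eq_of_lt hl']
    rw [h1]
    exact chain_getD (L ++ [a]) a h (i % p)
      (by rw [show (a :: (L ++ [a])).length = p + 1 from hclen]; omega)

lemma cyc_val (a : ℕ) (L : List ℕ) (h : List.Chain (fun a b => A a b = true) a (L ++ [a]))
    (i : ℕ) : (cyc A a L h).val i = (a :: (L ++ [a])).getD (i % (L.length + 1)) 0 := rfl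

lemma cyc_val_lt (a : ℕ) (L : List ℕ) (h : List.Chain (fun a b => A a b = true) a (L ++ [a]))
    {i : ℕ} (hi : i < L.length + 1) : (cyc A a L h).val i = (a :: L).getD i 0 := by
  rw [cyc_val, Nat.mod_eq_of_lt hi]
  match i, hi with
  | 0, _ => simp
  | (j+1), hj =>
    rw [List.getD_cons_succ, List.getD_cons_succ,
      List.getD_append L [a] 0 j (by omega)]

lemma cyc_periodic (a : ℕ) (L : List ℕ) (h : List.Chain (fun a b => A a b = true) a (L ++ [a])) :
    mshift^[L.length + 1] (cyc A a L h) = cyc A a L h := by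
  apply Subtype.ext
  funext i
  rw [iterate_val, cyc_val, cyc_val, Nat.add_mod_right]

lemma cyc_mem (a : ℕ) (L : List ℕ) (h : List.Chain (fun a b => A a b = true) a (L ++ [a]))
    (P : ℕ → Prop) (ha : P a) (hL : ∀ b ∈ L, P b) (i : ℕ) : P ((cyc A a L h).val i) := by
  rw [cyc_val]
  have hlt : i % (L.length + 1) < (a :: (L ++ [a])).length := by
    have := Nat.mod_lt i (show 0 < L.length + 1 by omega)
    simp; omega
  rw [List.getD_eq_getElem _ _ hlt]
  have hmem := List.getElem_mem hlt
  simp only [List.mem_cons, List.mem_append, List.mem_singleton] at hmem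
  rcases hmem with h1 | h2 | h3
  · rw [h1]; exact ha
  · exact hL _ h2
  · rcases h3 with h3 | h3
    · rw [h3]; exact ha
    · simp at h3

lemma chain_x (x : MShift A) : ∀ (s k : ℕ) (L : List ℕ),
    List.Chain (fun a b => A a b = true) (x.val (k + s)) L →
    List.Chain (fun a b => A a b = true) (x.val k)
      ((List.range s).map (fun j => x.val (k + 1 + j)) ++ L) := by
  intro s
  induction s with
  | zero => intro k L hL; simpa using hL
  | succ s ih =>
    intro k L hL
    rw [List.range_succ_eq_map]
    simp only [List.map_cons, List.map_map, List.cons_append]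
    apply List.chain_cons.mpr
    constructor
    · simpa using x.prop k
    · have : ((fun j => x.val (k + 1 + j)) ∘ Nat.succ) = (fun j => x.val (k + 1 + 1 + j)) := by
        funext j; simp [Function.comp]; ring_nf
      rw [this]
      exact ih (k+1) L (by rw [show k + 1 + s = k + (s+1) by ring]; exact hL)

lemma measurable_mshift : Measurable (mshift (A := A)) := by
  apply Measurable.subtype_mk
  exact measurable_pi_lambda _ (fun i => (measurable_pi_apply (i+1)).comp measurable_subtype_coe)

lemma integrable_dirac' (f : MShift A → ℝ) (a : MShift A) :
    Integrable f (Measure.dirac a) := by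
  refine (integrable_const (f a)).congr ?_
  rw [Filter.eventuallyEq_iff_exists_mem]
  exact ⟨{a}, by simp [MeasureTheory.mem_ae_iff], fun y hy => by simp at hy; simp [hy]⟩

lemma exists_ub
    (hirr : ∀ i j : ℕ, ∃ w : List ℕ, List.Chain (fun a b => A a b = true) i (w ++ [j]))
    (f : MShift A → ℝ)
    (hcoer : ∀ C : ℝ, ∃ N : ℕ, ∀ y : MShift A, N ≤ y.val 0 → f y < C)
    (V : ℝ)
    (hV : ∀ (r : ℕ) (x y : MShift A), (∀ i ≤ r, x.val i = y.val i) →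
      ∑ j ∈ Finset.range (r + 1), f (mshift^[j] x) ≤
        ∑ j ∈ Finset.range (r + 1), f (mshift^[j] y) + V) :
    ∃ M : ℝ, ∀ y : MShift A, f y ≤ M := by
  classical
  obtain ⟨N, hN⟩ := hcoer 0
  have hpt : ∀ j : ℕ, ∃ yj : MShift A, yj.val 0 = j := by
    intro j
    obtain ⟨w, hw⟩ := hirr j j
    refine ⟨cyc A j w hw, ?_⟩
    rw [cyc_val_lt _ _ _ (by omega)]
    rfl
  choose pt hpt using hpt
  set M₀ := ((Finset.range (N+1)).image (fun j => f (pt j) + V)).max'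
    (Finset.Nonempty.image ⟨0, Finset.mem_range.mpr (by omega)⟩ _) with hM₀
  refine ⟨max M₀ 0, fun y => ?_⟩
  rcases lt_or_ge (y.val 0) N with hlt | hge
  · have h1 := hV 0 y (pt (y.val 0)) (fun i hi => by
      rw [Nat.le_zero.mp hi]; exact (hpt _).symm)
    simp only [zero_add, Finset.sum_range_one, Function.iterate_zero_apply] at h1
    have h2 : f (pt (y.val 0)) + V ≤ M₀ := by
      apply Finset.le_max'
      exact Finset.mem_image.mpr ⟨y.val 0, Finset.mem_range.mpr (Nat.lt_succ_of_lt hlt), rfl⟩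
    exact le_trans (le_trans h1 h2) (le_max_left _ _)
  · exact le_trans (le_of_lt (hN y hge)) (le_max_right _ _)

lemma periodic_le_beta
    (f : MShift A → ℝ) (M : ℝ) (hM : ∀ y : MShift A, f y ≤ M)
    (β : ℝ)
    (hβ : β = sSup ((fun μ : Measure (MShift A) => ∫ x, f x ∂μ) ''
      {μ | IsProbabilityMeasure μ ∧ Measure.map mshift μ = μ}))
    (y : MShift A) (p : ℕ) (hp : 1 ≤ p) (hyper : mshift^[p] y = y) :
    ∑ j ∈ Finset.range p, f (mshift^[j] y) ≤ (p : ℝ) * β := by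
  classical
  set S : Set ℝ := (fun μ : Measure (MShift A) => ∫ x, f x ∂μ) ''
      {μ | IsProbabilityMeasure μ ∧ Measure.map mshift μ = μ} with hS
  have hM' : ∀ y : MShift A, f y ≤ max M 0 := fun y => le_trans (hM y) (le_max_left _ _)
  have hbdd : BddAbove S := by
    refine ⟨max M 0, fun v hv => ?_⟩
    obtain ⟨μ, ⟨hprob, _⟩, rfl⟩ := hv
    show ∫ x, f x ∂μ ≤ max M 0
    by_cases hint : Integrable f μ
    · calc ∫ x, f x ∂μ ≤ ∫ _x, max M 0 ∂μ := integral_mono hint (integrable_const _) hM'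
        _ = max M 0 := by simp [measure_univ]
    · rw [integral_undef hint]; exact le_max_right _ _
  set μy : Measure (MShift A) :=
    ((p : ℝ≥0∞))⁻¹ • ∑ j ∈ Finset.range p, Measure.dirac (mshift^[j] y) with hμy
  have hp0 : (p : ℝ≥0∞) ≠ 0 := by simp; omega
  have hpt : (p : ℝ≥0∞) ≠ ⊤ := by simp
  have hprob : IsProbabilityMeasure μy := by
    constructor
    rw [hμy]
    simp only [Measure.smul_apply, Measure.coe_finset_sum, Finset.sum_apply, smul_eq_mul]
    have : ∀ j ∈ Finset.range p, Measure.dirac (mshift^[j] y) Set.univ = 1 := by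
      intro j _; simp
    rw [Finset.sum_congr rfl this, Finset.sum_const, Finset.card_range, nsmul_eq_mul, mul_one]
    exact ENNReal.inv_mul_cancel hp0 hpt
  have hmapsum : ∀ (s : Finset ℕ) (μ : ℕ → Measure (MShift A)),
      Measure.map mshift (∑ i ∈ s, μ i) = ∑ i ∈ s, Measure.map mshift (μ i) := by
    intro s μ
    induction s using Finset.induction with
    | empty => simp
    | insert a s h ih =>
      rw [Finset.sum_insert h, Finset.sum_insert h, Measure.map_add _ _ measurable_mshift, ih]
  have hinv : Measure.map mshift μy = μy := by
    rw [hμy, Measure.map_smul, hmapsum]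
    congr 1
    have hdirac : ∀ j ∈ Finset.range p, Measure.map mshift (Measure.dirac (mshift^[j] y))
        = Measure.dirac (mshift^[j + 1] y) := by
      intro j _
      rw [Measure.map_dirac' measurable_mshift]
      congr 1
      rw [Function.iterate_succ_apply']
    rw [Finset.sum_congr rfl hdirac]
    apply sum_rotate (fun j => Measure.dirac (mshift^[j] y)) p
    rw [hyper]
    rfl
  have hint : ∫ x, f x ∂μy = (p : ℝ)⁻¹ * ∑ j ∈ Finset.range p, f (mshift^[j] y) := by
    rw [hμy, integral_smul_measure,
      integral_finset_sum_measure (fun i _ => integrable_dirac' f _)]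
    have : ∀ j ∈ Finset.range p, ∫ x, f x ∂(Measure.dirac (mshift^[j] y)) = f (mshift^[j] y) :=
      fun j _ => integral_dirac f _
    rw [Finset.sum_congr rfl this]
    rw [ENNReal.toReal_inv]
    simp
  have hmem : (p : ℝ)⁻¹ * ∑ j ∈ Finset.range p, f (mshift^[j] y) ∈ S := by
    rw [← hint]
    exact ⟨μy, ⟨hprob, hinv⟩, rfl⟩
  have hle : (p : ℝ)⁻¹ * ∑ j ∈ Finset.range p, f (mshift^[j] y) ≤ β := by
    rw [hβ]; exact le_csSup hbdd hmem
  have hpR : (0 : ℝ) < p := by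
    have : (1 : ℝ) ≤ (p : ℝ) := by exact_mod_cast hp
    linarith
  calc ∑ j ∈ Finset.range p, f (mshift^[j] y)
      = (p : ℝ) * ((p : ℝ)⁻¹ * ∑ j ∈ Finset.range p, f (mshift^[j] y)) := by
        field_simp
    _ ≤ (p : ℝ) * β := mul_le_mul_of_nonneg_left hle hpR.le

lemma window_exists (φ : ℕ → ℝ) (s : ℕ → ℕ) (t : ℝ) (I₁ I₂ : ℕ) (n : ℕ) (hn : 1 ≤ n)
    (hI₁₂ : I₁ ≤ I₂)
    (hsmallf : ∀ j, I₁ ≤ s j → φ j < t)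
    (hshift : ∀ c, ∑ j ∈ Finset.range n, φ (c + j) = (n : ℝ) * t)
    (hsper : ∀ j, s (j + n) = s j)
    (hb : ∃ b, I₂ ≤ s b) :
    ∃ ℓ m, 1 ≤ m ∧ s ℓ < I₁ ∧ (∀ j < m, s (ℓ + j) < I₂) ∧ I₂ ≤ s (ℓ + m) ∧
      ((m : ℝ) + 1) * t ≤ ∑ j ∈ Finset.range (m + 1), φ (ℓ + j) := by
  by_contra hcon
  push_neg at hcon
  have lemV : ∀ c L, (∀ j < L, s (c + j) < I₂) → I₂ ≤ s (c + L) →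
      ∑ j ∈ Finset.range (L + 1), φ (c + j) < ((L : ℝ) + 1) * t := by
    intro c L hfree hheavy
    by_cases hex : ∃ j, j < L ∧ s (c + j) < I₁
    · classical
      have hg := Nat.find_spec hex
      set g := Nat.find hex with hgdef
      obtain ⟨hgL, hgsmall⟩ := hg
      set m := L - g with hm
      have hm1 : 1 ≤ m := by
        rcases Nat.eq_zero_or_pos m with h0 | h1
        · exfalso
          have : g = L := by omega
          rw [this] at hgsmall; omega
        · exact h1
      have hwin := hcon (c + g) m hm1 hgsmall
      have hfree' : ∀ j < m, s (c + g + j) < I₂ := by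
        intro j hj
        rw [show c + g + j = c + (g + j) by ring]
        exact hfree _ (by omega)
      have hheavy' : I₂ ≤ s (c + g + m) := by
        rw [show c + g + m = c + L by omega]; exact hheavy
      have hwinlt := hwin hfree' hheavy'
      have hpre : ∀ j < g, φ (c + j) < t := by
        intro j hj
        apply hsmallf
        have hns := Nat.find_min hex (m := j) hj
        push_neg at hns
        rcases lt_or_ge j L with hjL | hjL
        · exact hns hjL
        · omega
      have hsplit : ∑ j ∈ Finset.range (L + 1), φ (c + j)
          = ∑ j ∈ Finset.range g, φ (c + j) + ∑ j ∈ Finset.range (m + 1), φ (c + g + j) := by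
        rw [show L + 1 = g + (m + 1) by omega, Finset.sum_range_add]
        congr 1
        apply Finset.sum_congr rfl
        intro j _
        congr 1
        ring
      rw [hsplit]
      have h1 : ∑ j ∈ Finset.range g, φ (c + j) ≤ (g : ℝ) * t := by
        calc ∑ j ∈ Finset.range g, φ (c + j) ≤ ∑ _j ∈ Finset.range g, t :=
          Finset.sum_le_sum (fun j hj => le_of_lt (hpre j (Finset.mem_range.mp hj)))
        _ = (g : ℝ) * t := by rw [Finset.sum_const, Finset.card_range]; ring
      have hLgm : ((L : ℝ) + 1) = (g : ℝ) + ((m : ℝ) + 1) := by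
        have : (↑(L - g) : ℝ) = (L : ℝ) - g := by
          rw [Nat.cast_sub (by omega)]
        rw [hm, this]; ring
      rw [hLgm, add_mul]
      exact add_lt_add_of_le_of_lt h1 hwinlt
    · push_neg at hex
      have hall : ∀ j < L + 1, φ (c + j) < t := by
        intro j hj
        rcases lt_or_ge j L with hjL | hjL
        · exact hsmallf _ (hex j hjL)
        · have : j = L := by omega
          rw [this]
          exact hsmallf _ (le_trans hI₁₂ hheavy)
      calc ∑ j ∈ Finset.range (L + 1), φ (c + j)
          < ∑ _j ∈ Finset.range (L + 1), t := by
            apply Finset.sum_lt_sum_of_nonempty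
            · exact Finset.nonempty_range_iff.mpr (by omega)
            · intro j hj; exact hall j (Finset.mem_range.mp hj)
        _ = ((L : ℝ) + 1) * t := by rw [Finset.sum_const, Finset.card_range]; push_cast; ring
  have lemW : ∀ N, ∀ c, 1 ≤ N → I₂ ≤ s (c + N) →
      ∑ j ∈ Finset.range N, φ (c + 1 + j) < (N : ℝ) * t := by
    intro N
    induction N using Nat.strong_induction_on with
    | _ N ih =>
      intro c hN hheavy
      by_cases hex : ∃ j, 1 ≤ j ∧ j < N ∧ I₂ ≤ s (c + j)
      · obtain ⟨j₀, hj₀1, hj₀N, hj₀heavy⟩ := hex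
        have hsplit : ∑ j ∈ Finset.range N, φ (c + 1 + j)
            = ∑ j ∈ Finset.range j₀, φ (c + 1 + j)
              + ∑ j ∈ Finset.range (N - j₀), φ ((c + j₀) + 1 + j) := by
          have h := Finset.sum_range_add (fun j => φ (c + 1 + j)) j₀ (N - j₀)
          rw [show j₀ + (N - j₀) = N by omega] at h
          rw [h]
          congr 1
          exact Finset.sum_congr rfl fun j _ => by congr 1; ring
        have h1 := ih j₀ hj₀N c hj₀1 hj₀heavy
        have h2 := ih (N - j₀) (by omega) (c + j₀) (by omega)
          (by rw [show c + j₀ + (N - j₀) = c + N by omega]; exact hheavy)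
        rw [hsplit]
        have : (N : ℝ) * t = (j₀ : ℝ) * t + ((N - j₀ : ℕ) : ℝ) * t := by
          rw [Nat.cast_sub (by omega)]; ring
        rw [this]
        exact add_lt_add h1 h2
      · push_neg at hex
        have hfree : ∀ j < N - 1, s (c + 1 + j) < I₂ := by
          intro j hj
          rw [show c + 1 + j = c + (j + 1) by ring]
          exact hex (j+1) (by omega) (by omega)
        have := lemV (c + 1) (N - 1) hfree
          (by rw [show c + 1 + (N - 1) = c + N by omega]; exact hheavy)
        rw [show N - 1 + 1 = N by omega] at this
        have hc : ((N - 1 : ℕ) : ℝ) + 1 = (N : ℝ) := by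
          rw [Nat.cast_sub (by omega)]; ring
        rw [hc] at this
        exact this
  obtain ⟨b, hbheavy⟩ := hb
  have h1 := lemW n b hn (by rw [hsper]; exact hbheavy)
  rw [hshift (b + 1)] at h1
  exact lt_irrefl _ h1

end Stmt9Aux

lemma arith_q0 (R t F Sr Z V δ : ℝ) (hR : 0 ≤ R) (hδ : 0 < δ) (hV0 : 0 ≤ V)
    (hkey : (R + 2) * t ≤ Sr + F) (hFt : F ≤ t - V - δ) (hZlow : Sr - V ≤ Z) :
    (R + 1) * t < Z ∧ (F + Sr + δ) * (R + 1) ≤ Z * (R + 2) := by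
  constructor
  · nlinarith
  · nlinarith [mul_le_mul_of_nonneg_right hZlow (show (0:ℝ) ≤ R + 2 by linarith),
      mul_nonneg (show (0:ℝ) ≤ R + 2 by linarith) (show (0:ℝ) ≤ t - V - δ - F by linarith)]

lemma arith_q1 (R Q P0 t β a b mf F Sr Z V δ : ℝ)
    (hR : 0 ≤ R) (hQ1 : 1 ≤ Q) (hQP : Q ≤ P0) (hδ : 0 < δ) (hV0 : 0 ≤ V)
    (ha : 0 ≤ a) (hb : 0 ≤ b) (hmfa : -a ≤ mf) (hβb : β ≤ b) (htβ : t ≤ β)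
    (hkey : (R + 2) * t ≤ Sr + F)
    (hFC1 : F ≤ -(P0 * a + (P0 - 1) * b + 2 * V) - δ)
    (hZlow : Sr + Q * mf - 2 * V ≤ Z)
    (hSup : Sr ≤ Z + 2 * V - Q * mf)
    (hZβ : Z ≤ (R + 1 + Q) * β) :
    (R + 1 + Q) * t < Z ∧ (F + Sr + δ) * (R + 1 + Q) ≤ Z * (R + 2) := by
  have h1 : (Q - 1) * t ≤ (P0 - 1) * b := by nlinarith
  have h2 : -(Q * a) ≤ Q * mf := by nlinarith
  have h3 : Q * a ≤ P0 * a := by nlinarith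
  constructor
  · nlinarith
  · have hSup' : Sr ≤ (R + 1 + Q) * β + 2 * V + Q * a := by nlinarith
    have hA : (Q - 1) * Sr ≤ (Q - 1) * ((R + 1 + Q) * β + 2 * V + Q * a) :=
      mul_le_mul_of_nonneg_left hSup' (by linarith)
    have hB : (R + 2) * (Sr + Q * mf - 2 * V) ≤ (R + 2) * Z :=
      mul_le_mul_of_nonneg_left hZlow (by linarith)
    have hC : (R + 1 + Q) * (F + δ) ≤ (R + 1 + Q) * (-(P0 * a + (P0 - 1) * b + 2 * V)) :=
      mul_le_mul_of_nonneg_left (by linarith) (by linarith)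
    have hD : -((R + 2) * Q * a) ≤ (R + 2) * Q * mf := by nlinarith
    have hb0 : (Q - 1) * β ≤ (P0 - 1) * b := by
      nlinarith [mul_le_mul_of_nonneg_left hβb (show (0:ℝ) ≤ Q - 1 by linarith),
        mul_le_mul_of_nonneg_right (show Q - 1 ≤ P0 - 1 by linarith) hb]
    have hb1 : (R + 1 + Q) * ((Q - 1) * β) ≤ (R + 1 + Q) * ((P0 - 1) * b) :=
      mul_le_mul_of_nonneg_left hb0 (by linarith)
    have hE : 0 ≤ (R + 1 + Q) * (P0 - Q) * a :=
      mul_nonneg (mul_nonneg (by linarith) (by linarith)) ha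
    linarith [hA, hB, hC, hD, hb1, hE]


open Stmt9Aux in
/-- Key cutting lemma, lemma 3 of the paper. Under the full setup of
the paper — `A` irreducible; `f` coercive with bounded variation `V`; `β` the
optimal ergodic average; `I₁` with `sup f|[j] < β - ε` for `j ≥ I₁`; `𝒜₁ ⊇ {0,…,I₁-1}`
a finite alphabet with chosen connecting words of length `≤ P₀` and `mf` a lower
bound for `f` on `Σ_A(𝒜₁)`; `I₂ ≥ I₁` and `𝒜₂ ⊇ 𝒜₁ ∪ {0,…,I₂-1}` finite irreducible,
with `sup f|[j] ≤ min{C₁,C₂} - δ` for `j ≥ I₂`, `δ > 0` — every periodic point `x`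
with `β(x) ≥ β - ε` whose orbit leaves `Σ_A(𝒜₂)` admits a periodic point
`z ∈ Σ_A(𝒜₂)` with `β(z) > β(x)`, and moreover `β(z) ≥ κ_r(ℓ,m|x) + δ/(r+2)` for the
word `x_ℓ … x_{ℓ+m}` given by the maximal-word decomposition. -/
theorem stmt9 (A : ℕ → ℕ → Bool)
    (hirr : ∀ i j : ℕ, ∃ w : List ℕ,
      List.Chain (fun a b => A a b = true) i (w ++ [j]))
    (f : MShift A → ℝ)
    (hcoer : ∀ C : ℝ, ∃ N : ℕ, ∀ y : MShift A, N ≤ y.val 0 → f y < C)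
    (V : ℝ) (hV0 : 0 ≤ V)
    (hV : ∀ (r : ℕ) (x y : MShift A), (∀ i ≤ r, x.val i = y.val i) →
      ∑ j ∈ Finset.range (r + 1), f (mshift^[j] x) ≤
        ∑ j ∈ Finset.range (r + 1), f (mshift^[j] y) + V)
    (β ε : ℝ) (hε : 0 < ε)
    (hβ : β = sSup ((fun μ : Measure (MShift A) => ∫ x, f x ∂μ) ''
      {μ | IsProbabilityMeasure μ ∧ Measure.map mshift μ = μ}))
    (I₁ : ℕ) (hI₁ : ∀ y : MShift A, I₁ ≤ y.val 0 → f y < β - ε)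
    (𝒜₁ : Finset ℕ) (h𝒜₁ : ∀ i < I₁, i ∈ 𝒜₁) (P₀ : ℕ)
    (hconn : ∀ i < I₁, ∀ j < I₁, ∃ w : List ℕ, w.length ≤ P₀ ∧ (∀ a ∈ w, a ∈ 𝒜₁) ∧
      List.Chain (fun a b => A a b = true) i (w ++ [j]))
    (mf : ℝ) (hmf : ∀ y : MShift A, (∀ i, y.val i ∈ 𝒜₁) → mf ≤ f y)
    (I₂ : ℕ) (hI₁₂ : I₁ ≤ I₂)
    (𝒜₂ : Finset ℕ) (h𝒜₂ : ∀ i < I₂, i ∈ 𝒜₂) (h𝒜₁₂ : 𝒜₁ ⊆ 𝒜₂)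
    (h𝒜₂irr : ∀ i ∈ 𝒜₂, ∀ j ∈ 𝒜₂, ∃ w : List ℕ, (∀ a ∈ w, a ∈ 𝒜₂) ∧
      List.Chain (fun a b => A a b = true) i (w ++ [j]))
    (δ : ℝ) (hδ : 0 < δ)
    (hI₂ : ∀ y : MShift A, I₂ ≤ y.val 0 →
      f y ≤ min (-((P₀ : ℝ) * |mf| + ((P₀ : ℝ) - 1) * |β| + 2 * V)) (β - ε - V) - δ)
    (x : MShift A) (n : ℕ) (hn : 1 ≤ n) (hper : mshift^[n] x = x)
    (hβx : β - ε ≤ (n : ℝ)⁻¹ * ∑ j ∈ Finset.range n, f (mshift^[j] x))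
    (hout : ∃ i, x.val i ∉ 𝒜₂) :
    ∃ (z : MShift A) (p : ℕ), 1 ≤ p ∧ mshift^[p] z = z ∧ (∀ i, z.val i ∈ 𝒜₂) ∧
      (n : ℝ)⁻¹ * ∑ j ∈ Finset.range n, f (mshift^[j] x) <
        (p : ℝ)⁻¹ * ∑ j ∈ Finset.range p, f (mshift^[j] z) ∧
      ∃ ℓ m r : ℕ, r < m ∧ x.val ℓ < I₁ ∧ I₂ ≤ x.val (ℓ + m) ∧
        (∀ j < m, x.val (ℓ + j) < I₂) ∧
        (n : ℝ)⁻¹ * ∑ j ∈ Finset.range n, f (mshift^[j] x) ≤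
          ((m : ℝ) + 1)⁻¹ * ∑ j ∈ Finset.range (m + 1), f (mshift^[ℓ + j] x) ∧
        ((r : ℝ) + 2)⁻¹ *
            (f (mshift^[ℓ + m] x) + ∑ j ∈ Finset.range (r + 1), f (mshift^[ℓ + j] x)) +
            δ / ((r : ℝ) + 2) ≤
          (p : ℝ)⁻¹ * ∑ j ∈ Finset.range p, f (mshift^[j] z) := by
  classical
  -- basic notation
  set T : ℝ := ∑ j ∈ Finset.range n, f (mshift^[j] x) with hTdef
  set t : ℝ := (n : ℝ)⁻¹ * T with htdef
  have hnR : (0 : ℝ) < (n : ℝ) := by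
    have : (1 : ℝ) ≤ (n : ℝ) := by exact_mod_cast hn
    linarith
  have hβεt : β - ε ≤ t := hβx
  have hTnt : T = (n : ℝ) * t := by
    rw [htdef]; field_simp
  -- periodicity facts
  have hperiter : ∀ j, mshift^[j + n] x = mshift^[j] x := fun j => by
    rw [Function.iterate_add_apply, hper]
  have hxper : ∀ i, x.val (i + n) = x.val i := fun i => by
    have h := iterate_val x n i
    rw [hper] at h
    exact h.symm
  -- f at a shifted point with large symbol
  have hflt : ∀ j, I₁ ≤ x.val j → f (mshift^[j] x) < β - ε := by
    intro j hj
    apply hI₁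
    rw [iterate_val]
    simpa using hj
  have hflt' : ∀ j, I₁ ≤ x.val j → f (mshift^[j] x) < t :=
    fun j hj => lt_of_lt_of_le (hflt j hj) hβεt
  -- shift invariance of the period sum
  have hshift : ∀ c, ∑ j ∈ Finset.range n, f (mshift^[c + j] x) = T := by
    intro c
    induction c with
    | zero => simp [hTdef]
    | succ c ih =>
      have hrot : ∑ j ∈ Finset.range n, f (mshift^[c + (j + 1)] x)
          = ∑ j ∈ Finset.range n, f (mshift^[c + j] x) := by
        apply sum_rotate (fun j => f (mshift^[c + j] x)) n
        show f (mshift^[c + n] x) = f (mshift^[c + 0] x)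
        rw [hperiter c, Nat.add_zero]
      calc ∑ j ∈ Finset.range n, f (mshift^[c + 1 + j] x)
          = ∑ j ∈ Finset.range n, f (mshift^[c + (j + 1)] x) := by
            apply Finset.sum_congr rfl
            intro j _
            congr 2
            ring
        _ = ∑ j ∈ Finset.range n, f (mshift^[c + j] x) := hrot
        _ = T := ih
  have hshift' : ∀ c, ∑ j ∈ Finset.range n, f (mshift^[c + j] x) = (n : ℝ) * t := by
    intro c; rw [hshift c, hTnt]
  -- existence of heavy symbol
  have hheavyex : ∃ b, I₂ ≤ x.val b := by
    obtain ⟨i0, h0⟩ := hout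
    refine ⟨i0, ?_⟩
    by_contra h
    push_neg at h
    exact h0 (h𝒜₂ _ h)
  -- the window
  obtain ⟨ℓ, m, hm1, hℓsmall, hfree, hheavy, hwin⟩ :=
    window_exists (fun j => f (mshift^[j] x)) x.val t I₁ I₂ n hn hI₁₂ hflt' hshift' hxper
      hheavyex
  -- the index r
  have hPdec : DecidablePred (fun j => x.val (ℓ + j) < I₁) := fun _ => inferInstance
  set r := Nat.findGreatest (fun j => x.val (ℓ + j) < I₁) (m - 1) with hrdef
  have hrP : x.val (ℓ + r) < I₁ := by
    exact Nat.findGreatest_spec (P := fun j => x.val (ℓ + j) < I₁) (m := 0)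
      (Nat.zero_le _) (by simpa using hℓsmall)
  have hrle : r ≤ m - 1 := Nat.findGreatest_le _
  have hrm : r < m := by omega
  have hmid : ∀ j, r < j → j < m → I₁ ≤ x.val (ℓ + j) := by
    intro j h1 h2
    have := Nat.findGreatest_is_greatest (P := fun j => x.val (ℓ + j) < I₁) h1 (by omega)
    omega
  -- main quantities
  set F : ℝ := f (mshift^[ℓ + m] x) with hFdef
  set Sr : ℝ := ∑ j ∈ Finset.range (r + 1), f (mshift^[ℓ + j] x) with hSrdef
  have hFle : F ≤ min (-((P₀ : ℝ) * |mf| + ((P₀ : ℝ) - 1) * |β| + 2 * V)) (β - ε - V) - δ := by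
    apply hI₂
    rw [iterate_val]
    simpa using hheavy
  have hFC1 : F ≤ -((P₀ : ℝ) * |mf| + ((P₀ : ℝ) - 1) * |β| + 2 * V) - δ :=
    le_trans hFle (by linarith [min_le_left (-((P₀ : ℝ) * |mf| + ((P₀ : ℝ) - 1) * |β| + 2 * V)) (β - ε - V)])
  have hFC2 : F ≤ β - ε - V - δ :=
    le_trans hFle (by linarith [min_le_right (-((P₀ : ℝ) * |mf| + ((P₀ : ℝ) - 1) * |β| + 2 * V)) (β - ε - V)])
  have hFt : F ≤ t - V - δ := by linarith
  -- key window inequality : (r+2) t ≤ Sr + F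
  have hkey : ((r : ℝ) + 2) * t ≤ Sr + F := by
    have hsplit : ∑ j ∈ Finset.range (m + 1), f (mshift^[ℓ + j] x)
        = (Sr + ∑ j ∈ Finset.range (m - (r + 1)), f (mshift^[ℓ + (r + 1 + j)] x)) + F := by
      rw [Finset.sum_range_succ]
      congr 1
      have h := Finset.sum_range_add (fun j => f (mshift^[ℓ + j] x)) (r + 1) (m - (r + 1))
      rw [show r + 1 + (m - (r + 1)) = m by omega] at h
      rw [h, hSrdef]
    have hmidle : ∑ j ∈ Finset.range (m - (r + 1)), f (mshift^[ℓ + (r + 1 + j)] x)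
        ≤ ((m - (r + 1) : ℕ) : ℝ) * t := by
      calc ∑ j ∈ Finset.range (m - (r + 1)), f (mshift^[ℓ + (r + 1 + j)] x)
          ≤ ∑ _j ∈ Finset.range (m - (r + 1)), t := by
            apply Finset.sum_le_sum
            intro j hj
            rw [Finset.mem_range] at hj
            exact le_of_lt (hflt' _ (hmid (r + 1 + j) (by omega) (by omega)))
        _ = ((m - (r + 1) : ℕ) : ℝ) * t := by
            rw [Finset.sum_const, Finset.card_range]; ring
    have hcast : ((m - (r + 1) : ℕ) : ℝ) = (m : ℝ) - (r : ℝ) - 1 := by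
      rw [Nat.cast_sub (by omega)]; push_cast; ring
    rw [hsplit] at hwin
    rw [hcast] at hmidle
    linarith
  -- connecting word
  obtain ⟨w, hwlen, hwmem, hwchain⟩ := hconn (x.val (ℓ + r)) hrP (x.val ℓ) hℓsmall
  set q := w.length with hqdef
  set L : List ℕ := (List.range r).map (fun j => x.val (ℓ + 1 + j)) ++ w with hLdef
  have hLlen : L.length = r + q := by simp [hLdef, hqdef]
  have hchain : List.Chain (fun a b => A a b = true) (x.val ℓ) (L ++ [x.val ℓ]) := by
    rw [hLdef, List.append_assoc]
    exact chain_x x r ℓ (w ++ [x.val ℓ]) hwchain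
  set z : MShift A := cyc A (x.val ℓ) L hchain with hzdef
  set p := L.length + 1 with hpdef
  have hpq : p = r + 1 + q := by omega
  have hp1 : 1 ≤ p := by omega
  have hzper : mshift^[p] z = z := cyc_periodic _ _ _
  have hzmem : ∀ i, z.val i ∈ 𝒜₂ := by
    apply cyc_mem
    · exact h𝒜₂ _ (lt_of_lt_of_le hℓsmall hI₁₂)
    · intro b hb
      rw [hLdef] at hb
      rcases List.mem_append.mp hb with hb | hb
      · obtain ⟨j, hj, rfl⟩ := List.mem_map.mp hb
        rw [List.mem_range] at hj
        exact h𝒜₂ _ (by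
          have := hfree (1 + j) (by omega)
          rw [show ℓ + 1 + j = ℓ + (1 + j) by ring]
          exact this)
      · exact h𝒜₁₂ (hwmem _ hb)
  -- coordinates of z
  have hzval : ∀ i ≤ r, z.val i = x.val (ℓ + i) := by
    intro i hi
    rw [hzdef, cyc_val_lt _ _ _ (by omega : i < L.length + 1)]
    match i, hi with
    | 0, _ => simp
    | (j+1), hj =>
      rw [List.getD_cons_succ, hLdef,
        List.getD_append _ _ _ _ (by simp; omega),
        List.getD_eq_getElem _ _ (by simp; omega)]
      simp only [List.getElem_map, List.getElem_range]
      rw [show ℓ + 1 + j = ℓ + (j + 1) by omega]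
  have hzvalw : ∀ i, i < q → z.val (r + 1 + i) = w.getD i 0 := by
    intro i hi
    rw [hzdef, cyc_val_lt _ _ _ (show r + 1 + i < L.length + 1 by rw [hLlen]; omega),
      show r + 1 + i = (r + i) + 1 by ring, List.getD_cons_succ, hLdef,
      List.getD_append_right _ _ _ _ (by simp)]
    simp
  -- lower bound on the x-part of z
  have hZ1 : Sr ≤ (∑ j ∈ Finset.range (r + 1), f (mshift^[j] z)) + V := by
    have hagree : ∀ i ≤ r, (mshift^[ℓ] x).val i = z.val i := by
      intro i hi
      rw [iterate_val, hzval i hi, Nat.add_comm]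
    have h := hV r (mshift^[ℓ] x) z hagree
    have hLHS : ∑ j ∈ Finset.range (r + 1), f (mshift^[j] (mshift^[ℓ] x)) = Sr := by
      rw [hSrdef]
      apply Finset.sum_congr rfl
      intro j _
      congr 1
      rw [← Function.iterate_add_apply, Nat.add_comm]
    rw [hLHS] at h
    exact h
  -- decomposition of the z-sum
  set Z : ℝ := ∑ j ∈ Finset.range p, f (mshift^[j] z) with hZdef
  set W2 : ℝ := ∑ j ∈ Finset.range q, f (mshift^[j] (mshift^[r + 1] z)) with hW2def
  have hZsplit : Z = (∑ j ∈ Finset.range (r + 1), f (mshift^[j] z)) + W2 := by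
    rw [hZdef, hW2def]
    have h := Finset.sum_range_add (fun j => f (mshift^[j] z)) (r + 1) q
    rw [show r + 1 + q = p by omega] at h
    rw [h]
    congr 1
    apply Finset.sum_congr rfl
    intro j _
    congr 1
    rw [← Function.iterate_add_apply, Nat.add_comm]
  -- upper bound via variational principle
  obtain ⟨M, hM⟩ := exists_ub hirr f hcoer V hV
  have hZβ : Z ≤ (p : ℝ) * β := periodic_le_beta f M hM β hβ z p hp1 hzper
  have hTβ : T ≤ (n : ℝ) * β := periodic_le_beta f M hM β hβ x n hn hper
  have htβ : t ≤ β := by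
    rw [htdef]
    rw [inv_mul_eq_div, div_le_iff₀ hnR]
    linarith
  -- cast facts
  have hqP : (q : ℝ) ≤ (P₀ : ℝ) := by exact_mod_cast hwlen
  have hpR : (0 : ℝ) < (p : ℝ) := by
    have : (1 : ℝ) ≤ (p : ℝ) := by exact_mod_cast hp1
    linarith
  have hpcast : (p : ℝ) = (r : ℝ) + 1 + (q : ℝ) := by
    rw [hpq]; push_cast; ring
  have habs1 : -|mf| ≤ mf := neg_abs_le mf
  have habs2 : β ≤ |β| := le_abs_self β
  have habs3 : (0:ℝ) ≤ |mf| := abs_nonneg mf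
  have habs4 : (0:ℝ) ≤ |β| := abs_nonneg β
  have hrR : (0:ℝ) ≤ (r : ℝ) := Nat.cast_nonneg r
  have hqR : (0:ℝ) ≤ (q : ℝ) := Nat.cast_nonneg q
  -- the two main estimates
  have hmain : (p : ℝ) * t < Z ∧ (F + Sr + δ) * (p : ℝ) ≤ Z * ((r : ℝ) + 2) := by
    by_cases hq0 : q = 0
    · -- no connecting word
      have hW2z : W2 = 0 := by rw [hW2def, hq0]; simp
      have hZlow : Sr - V ≤ Z := by
        rw [hZsplit, hW2z]
        linarith
      have hpr : (p : ℝ) = (r : ℝ) + 1 := by rw [hpcast, hq0]; push_cast; ring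
      have har := arith_q0 (r : ℝ) t F Sr Z V δ hrR hδ hV0 hkey hFt hZlow
      rw [hpr]
      exact har
    · -- there is a connecting word
      have hq1 : 1 ≤ q := Nat.one_le_iff_ne_zero.mpr hq0
      have hq1R : (1 : ℝ) ≤ (q : ℝ) := by exact_mod_cast hq1
      -- build the auxiliary point y' ∈ Σ(𝒜₁) starting with w
      obtain ⟨w₂, hw₂len, hw₂mem, hw₂chain⟩ := hconn (x.val ℓ) hℓsmall (x.val (ℓ + r)) hrP
      set L' : List ℕ := w ++ (x.val ℓ :: w₂) with hL'def
      have hchain' : List.Chain (fun a b => A a b = true) (x.val (ℓ + r)) (L' ++ [x.val (ℓ + r)]) := by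
        rw [hL'def]
        have : (w ++ (x.val ℓ :: w₂)) ++ [x.val (ℓ + r)] = w ++ (x.val ℓ :: (w₂ ++ [x.val (ℓ + r)])) := by
          simp
        rw [this]
        exact List.isChain_cons_split.mpr ⟨hwchain, hw₂chain⟩
      set ycyc := cyc A (x.val (ℓ + r)) L' hchain' with hycycdef
      have hycycmem : ∀ i, ycyc.val i ∈ 𝒜₁ := by
        apply cyc_mem
        · exact h𝒜₁ _ hrP
        · intro b hb
          rw [hL'def] at hb
          rcases List.mem_append.mp hb with hb | hb
          · exact hwmem _ hb
          · rcases List.mem_cons.mp hb with hb | hb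
            · rw [hb]; exact h𝒜₁ _ hℓsmall
            · exact hw₂mem _ hb
      set y' := mshift ycyc with hy'def
      have hy'shift : ∀ k i, (mshift^[k] y').val i ∈ 𝒜₁ := by
        intro k i
        rw [iterate_val]
        exact hycycmem _
      have hfy' : ∀ k, mf ≤ f (mshift^[k] y') := fun k => hmf _ (fun i => hy'shift k i)
      have hy'val : ∀ i, i < q → y'.val i = w.getD i 0 := by
        intro i hi
        show ycyc.val (i + 1) = w.getD i 0
        rw [hycycdef, cyc_val_lt _ _ _ (by
          rw [hL'def]; simp; omega), List.getD_cons_succ, hL'def,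
          List.getD_append _ _ _ _ (by omega)]
      -- lower bound on the w-part of z
      have hW2low : (q : ℝ) * mf - V ≤ W2 := by
        have hagree : ∀ i ≤ q - 1, y'.val i = (mshift^[r + 1] z).val i := by
          intro i hi
          rw [iterate_val, hy'val i (by omega), show i + (r + 1) = r + 1 + i by ring,
            hzvalw i (by omega)]
        have h := hV (q - 1) y' (mshift^[r + 1] z) hagree
        rw [show q - 1 + 1 = q by omega] at h
        have hmf' : (q : ℝ) * mf ≤ ∑ j ∈ Finset.range q, f (mshift^[j] y') := by
          calc (q : ℝ) * mf = ∑ _j ∈ Finset.range q, mf := by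
                rw [Finset.sum_const, Finset.card_range]; ring
            _ ≤ ∑ j ∈ Finset.range q, f (mshift^[j] y') :=
              Finset.sum_le_sum (fun j _ => hfy' j)
        rw [hW2def]
        linarith
      have hZlow : Sr + (q : ℝ) * mf - 2 * V ≤ Z := by
        rw [hZsplit]
        linarith
      have hSup : Sr ≤ Z + 2 * V - (q : ℝ) * mf := by
        rw [hZsplit] at *
        linarith
      have har := arith_q1 (r : ℝ) (q : ℝ) (P₀ : ℝ) t β |mf| |β| mf F Sr Z V δ
        hrR hq1R hqP hδ hV0 habs3 habs4 habs1 habs2 htβ hkey hFC1 hZlow hSup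
        (by rw [← hpcast]; exact hZβ)
      rw [hpcast]
      exact har
  -- convert to the required form
  obtain ⟨hmain1, hmain2⟩ := hmain
  have hr2 : (0 : ℝ) < (r : ℝ) + 2 := by linarith
  refine ⟨z, p, hp1, hzper, hzmem, ?_, ℓ, m, r, hrm, hℓsmall, hheavy, hfree, ?_, ?_⟩
  · show t < (p : ℝ)⁻¹ * Z
    rw [inv_mul_eq_div, lt_div_iff₀ hpR]
    linarith
  · show t ≤ ((m : ℝ) + 1)⁻¹ * ∑ j ∈ Finset.range (m + 1), f (mshift^[ℓ + j] x)
    rw [inv_mul_eq_div, le_div_iff₀ (by positivity)]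
    linarith [hwin]
  · show ((r : ℝ) + 2)⁻¹ * (F + Sr) + δ / ((r : ℝ) + 2) ≤ (p : ℝ)⁻¹ * Z
    rw [inv_mul_eq_div, inv_mul_eq_div, ← add_div, div_le_div_iff₀ hr2 hpR]
    linarith
end
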